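/- Let (X_k)_{1≤k≤n} admit a dependency graph of maximal degree m, and let the graph on vertex set Λ_{n,ℓ} connect α = (α₁,…,α_ℓ) and β = (β₁,…,β_ℓ) if and only if there exist i,j ∈ {1,…,ℓ} with α_i = β_j or with α_i adjacent to β_j in the dependency graph of (X_k). Then this graph is a dependency graph for the family (f(X_α))_{α∈Λ_{n,ℓ}} for any measurable f : 𝒮^ℓ → ℝ, it has N = n!/(n−ℓ)! vertices, and its maximal degree D satisfies D ≤ ℓ²(m+1)·C(n−1,ℓ−1)·(ℓ−1)! − 1 = ℓ²(m+1)·N/n − 1. -/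
import Mathlib


open MeasureTheory ProbabilityTheory Filter

noncomputable section

/-- `G` is a dependency graph of the family `Y`: whenever `V₁, V₂` are disjoint sets of
vertices with no edge of `G` between them, the families `(Y k)_{k ∈ V₁}` and
`(Y k)_{k ∈ V₂}` are independent. -/
def IsDependencyGraph {Ω V E : Type*} [MeasurableSpace Ω] [MeasurableSpace E]
    (μ : Measure Ω) (G : SimpleGraph V) (Y : V → Ω → E) : Prop :=
  ∀ V₁ V₂ : Set V, Disjoint V₁ V₂ →
    (∀ i ∈ V₁, ∀ j ∈ V₂, ¬ G.Adj i j) →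
    IndepFun (fun ω (i : V₁) => Y i.1 ω) (fun ω (j : V₂) => Y j.1 ω) μ

/-- Kolmogorov distance between the law of `W` under `μ` and the standard normal law. -/
def dKolNormal {Ω : Type*} [MeasurableSpace Ω] (μ : Measure Ω) (W : Ω → ℝ) : ℝ :=
  ⨆ t : ℝ, |(μ {ω | W ω ≤ t}).toReal - (gaussianReal 0 1 (Set.Iic t)).toReal|

private lemma card_fix_aux (n ℓ : ℕ) (j : Fin ℓ) (v : Fin n) :
    (Finset.univ.filter
      (fun β : {α : Fin ℓ → Fin n // Function.Injective α} => β.1 j = v)).card ≤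
      (n - 1).descFactorial (ℓ - 1) := by
  classical
  calc (Finset.univ.filter
      (fun β : {α : Fin ℓ → Fin n // Function.Injective α} => β.1 j = v)).card
      = Fintype.card {β : {α : Fin ℓ → Fin n // Function.Injective α} // β.1 j = v} :=
        (Fintype.card_subtype _).symm
    _ ≤ Fintype.card ({x : Fin ℓ // x ≠ j} ↪ {y : Fin n // y ≠ v}) := by
        apply Fintype.card_le_of_injective
          (fun β => ⟨fun x => ⟨β.1.1 x.1, fun h => x.2 (β.1.2 (h.trans β.2.symm))⟩,
            fun x y hxy => Subtype.ext (β.1.2 (congrArg Subtype.val hxy))⟩)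
        intro β₁ β₂ h
        apply Subtype.ext; apply Subtype.ext; funext x
        by_cases hx : x = j
        · subst hx; exact β₁.2.trans β₂.2.symm
        · exact congrArg Subtype.val (congrFun (congrArg Function.Embedding.toFun h) ⟨x, hx⟩)
    _ = (n - 1).descFactorial (ℓ - 1) := by
        rw [Fintype.card_embedding_eq]
        simp [Fintype.card_subtype_compl]

/-- The induced graph on tuples of pairwise distinct indices is a dependency graph for the
family `(f(X_α))_α`; it has `n!/(n−ℓ)!` vertices and maximal degree at most
`ℓ²(m+1)·C(n−1,ℓ−1)·(ℓ−1)! − 1 = ℓ²(m+1)·N/n − 1`. -/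
theorem ustatistic_dependency_graph
    {Ω 𝒮 : Type*} [MeasurableSpace Ω] [MeasurableSpace 𝒮]
    (μ : Measure Ω) [IsProbabilityMeasure μ]
    (n ℓ m : ℕ) (hℓ : 1 ≤ ℓ) (hℓn : ℓ ≤ n)
    (X : Fin n → Ω → 𝒮) (hXmeas : ∀ k, Measurable (X k))
    (G : SimpleGraph (Fin n)) [DecidableRel G.Adj]
    (hG : IsDependencyGraph μ G X)
    (hdeg : ∀ k, G.degree k ≤ m)
    (G' : SimpleGraph {α : Fin ℓ → Fin n // Function.Injective α})
    [DecidableRel G'.Adj]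
    (hG'adj : ∀ α β, G'.Adj α β ↔ α ≠ β ∧
      ∃ i j : Fin ℓ, α.1 i = β.1 j ∨ G.Adj (α.1 i) (β.1 j))
    (f : (Fin ℓ → 𝒮) → ℝ) (hf : Measurable f) :
    IsDependencyGraph μ G' (fun α ω => f (fun i => X (α.1 i) ω)) ∧
    Fintype.card {α : Fin ℓ → Fin n // Function.Injective α} =
      Nat.factorial n / Nat.factorial (n - ℓ) ∧
    (∀ α, G'.degree α + 1 ≤ ℓ ^ 2 * (m + 1) * Nat.choose (n - 1) (ℓ - 1) *
      Nat.factorial (ℓ - 1)) ∧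
    n * (ℓ ^ 2 * (m + 1) * Nat.choose (n - 1) (ℓ - 1) * Nat.factorial (ℓ - 1)) =
      ℓ ^ 2 * (m + 1) * (Nat.factorial n / Nat.factorial (n - ℓ)) := by
  refine ⟨?_, ?_, ?_, ?_⟩
  · -- dependency graph property
    intro V₁ V₂ hdisj hedge
    set I₁ : Set (Fin n) := {k | ∃ a ∈ V₁, ∃ i, a.1 i = k} with hI₁
    set I₂ : Set (Fin n) := {k | ∃ b ∈ V₂, ∃ j, b.1 j = k} with hI₂
    have hd : Disjoint I₁ I₂ := by
      rw [Set.disjoint_left]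
      rintro k ⟨a, ha, i, rfl⟩ ⟨b, hb, j, hba⟩
      have hab : a ≠ b := fun h => Set.disjoint_left.mp hdisj ha (h ▸ hb)
      exact hedge a ha b hb ((hG'adj a b).mpr ⟨hab, i, j, Or.inl hba.symm⟩)
    have he : ∀ k ∈ I₁, ∀ k' ∈ I₂, ¬ G.Adj k k' := by
      rintro k ⟨a, ha, i, rfl⟩ k' ⟨b, hb, j, rfl⟩ hadj
      have hab : a ≠ b := fun h => Set.disjoint_left.mp hdisj ha (h ▸ hb)
      exact hedge a ha b hb ((hG'adj a b).mpr ⟨hab, i, j, Or.inr hadj⟩)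
    have key := hG I₁ I₂ hd he
    have := key.comp (φ := fun (g : I₁ → 𝒮) (a : V₁) =>
        f (fun i => g ⟨a.1.1 i, ⟨a.1, a.2, i, rfl⟩⟩))
      (ψ := fun (g : I₂ → 𝒮) (b : V₂) =>
        f (fun j => g ⟨b.1.1 j, ⟨b.1, b.2, j, rfl⟩⟩))
      (measurable_pi_lambda _ fun a =>
        hf.comp (measurable_pi_lambda _ fun i => measurable_pi_apply _))
      (measurable_pi_lambda _ fun b =>
        hf.comp (measurable_pi_lambda _ fun j => measurable_pi_apply _))
    exact this
  · rw [Fintype.card_congr (Equiv.subtypeInjectiveEquivEmbedding (Fin ℓ) (Fin n)),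
      Fintype.card_embedding_eq, Fintype.card_fin, Fintype.card_fin,
      Nat.descFactorial_eq_div hℓn]
  · -- degree bound
    intro α
    classical
    set T : Finset {α : Fin ℓ → Fin n // Function.Injective α} :=
      Finset.univ.filter
        (fun β => ∃ i j : Fin ℓ, α.1 i = β.1 j ∨ G.Adj (α.1 i) (β.1 j)) with hT
    have hα : α ∈ T := by
      simp only [hT, Finset.mem_filter, Finset.mem_univ, true_and]
      exact ⟨⟨0, hℓ⟩, ⟨0, hℓ⟩, Or.inl rfl⟩
    have hsub : G'.neighborFinset α ∪ {α} ⊆ T := by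
      intro β hβ
      rcases Finset.mem_union.mp hβ with hβ | hβ
      · have := (hG'adj α β).mp ((SimpleGraph.mem_neighborFinset _ _ _).mp hβ)
        simp only [hT, Finset.mem_filter, Finset.mem_univ, true_and]
        exact this.2
      · rwa [Finset.mem_singleton.mp hβ]
    have hcard1 : G'.degree α + 1 = (G'.neighborFinset α ∪ {α}).card := by
      rw [Finset.card_union_of_disjoint (Finset.disjoint_singleton_right.mpr (by
        rw [SimpleGraph.mem_neighborFinset]; exact G'.irrefl)), Finset.card_singleton,
        SimpleGraph.card_neighborFinset_eq_degree]
    have hTsub : T ⊆ Finset.univ.biUnion (fun p : Fin ℓ × Fin ℓ =>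
        Finset.univ.filter
          (fun β : {α : Fin ℓ → Fin n // Function.Injective α} =>
            α.1 p.1 = β.1 p.2 ∨ G.Adj (α.1 p.1) (β.1 p.2))) := by
      intro β hβ
      simp only [hT, Finset.mem_filter, Finset.mem_univ, true_and] at hβ
      obtain ⟨i, j, hij⟩ := hβ
      exact Finset.mem_biUnion.mpr ⟨(i, j), Finset.mem_univ _,
        Finset.mem_filter.mpr ⟨Finset.mem_univ _, hij⟩⟩
    have hpair : ∀ p : Fin ℓ × Fin ℓ,
        (Finset.univ.filter
          (fun β : {α : Fin ℓ → Fin n // Function.Injective α} =>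
            α.1 p.1 = β.1 p.2 ∨ G.Adj (α.1 p.1) (β.1 p.2))).card ≤
          (m + 1) * (n - 1).descFactorial (ℓ - 1) := by
      intro p
      have hsub2 : Finset.univ.filter
          (fun β : {α : Fin ℓ → Fin n // Function.Injective α} =>
            α.1 p.1 = β.1 p.2 ∨ G.Adj (α.1 p.1) (β.1 p.2)) ⊆
          (G.neighborFinset (α.1 p.1) ∪ {α.1 p.1}).biUnion (fun v =>
            Finset.univ.filter
              (fun β : {α : Fin ℓ → Fin n // Function.Injective α} => β.1 p.2 = v)) := by
        intro β hβ
        simp only [Finset.mem_filter, Finset.mem_univ, true_and] at hβ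
        apply Finset.mem_biUnion.mpr
        refine ⟨β.1 p.2, ?_, Finset.mem_filter.mpr ⟨Finset.mem_univ _, rfl⟩⟩
        rcases hβ with h | h
        · exact Finset.mem_union.mpr (Or.inr (Finset.mem_singleton.mpr h.symm))
        · exact Finset.mem_union.mpr (Or.inl ((SimpleGraph.mem_neighborFinset _ _ _).mpr h))
      calc _ ≤ _ := Finset.card_le_card hsub2
        _ ≤ ∑ _v ∈ G.neighborFinset (α.1 p.1) ∪ {α.1 p.1},
              (n - 1).descFactorial (ℓ - 1) :=
            le_trans (Finset.card_biUnion_le)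
              (Finset.sum_le_sum (fun v _ => card_fix_aux n ℓ p.2 v))
        _ ≤ (m + 1) * (n - 1).descFactorial (ℓ - 1) := by
            rw [Finset.sum_const, smul_eq_mul]
            apply Nat.mul_le_mul_right
            calc (G.neighborFinset (α.1 p.1) ∪ {α.1 p.1}).card
                ≤ (G.neighborFinset (α.1 p.1)).card + 1 := by
                  simpa using Finset.card_union_le (G.neighborFinset (α.1 p.1)) {α.1 p.1}
              _ ≤ m + 1 := Nat.add_le_add_right (hdeg (α.1 p.1)) 1
    calc G'.degree α + 1 = (G'.neighborFinset α ∪ {α}).card := hcard1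
      _ ≤ T.card := Finset.card_le_card hsub
      _ ≤ ∑ p : Fin ℓ × Fin ℓ, (Finset.univ.filter
          (fun β : {α : Fin ℓ → Fin n // Function.Injective α} =>
            α.1 p.1 = β.1 p.2 ∨ G.Adj (α.1 p.1) (β.1 p.2))).card :=
        le_trans (Finset.card_le_card hTsub) Finset.card_biUnion_le
      _ ≤ ∑ _p : Fin ℓ × Fin ℓ, (m + 1) * (n - 1).descFactorial (ℓ - 1) :=
        Finset.sum_le_sum (fun p _ => hpair p)
      _ = ℓ ^ 2 * ((m + 1) * (n - 1).descFactorial (ℓ - 1)) := by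
        rw [Finset.sum_const, smul_eq_mul]; simp [sq]
      _ = ℓ ^ 2 * (m + 1) * Nat.choose (n - 1) (ℓ - 1) * Nat.factorial (ℓ - 1) := by
        rw [Nat.descFactorial_eq_factorial_mul_choose]; ring
  · rw [(Nat.descFactorial_eq_div hℓn).symm]
    obtain ⟨ℓ', rfl⟩ : ∃ l', ℓ = l' + 1 := ⟨ℓ - 1, (Nat.succ_pred_eq_of_pos hℓ).symm⟩
    obtain ⟨n', rfl⟩ : ∃ n'', n = n'' + 1 :=
      ⟨n - 1, (Nat.succ_pred_eq_of_pos (le_trans hℓ hℓn)).symm⟩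
    rw [Nat.succ_descFactorial_succ, Nat.add_sub_cancel, Nat.add_sub_cancel,
      Nat.descFactorial_eq_factorial_mul_choose]
    ring
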